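/- arXiv:0809.4964 — 3 statements merged into one kernel-verified Lean document; each statement's English description precedes it below -/
import Mathlib

section
/- For every filter ℱ on a quasi-uniform space (X, 𝒰), the 2-envelope 𝒟_𝒰(ℱ) has the same set of τ(𝒰)-cluster points and the same set of τ(𝒰⁻¹)-cluster points as ℱ. -/
open Filter Set

variable {X Y : Type*}

/-- Image of a set under a relation: `U(A) = {y : ∃ x ∈ A, (x,y) ∈ U}`. -/
def relImg (U : Set (X × X)) (A : Set X) : Set X := {y | ∃ x ∈ A, (x, y) ∈ U}

/-- Inverse image: `U⁻¹(A) = {y : ∃ x ∈ A, (y,x) ∈ U}`. -/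
def relPre (U : Set (X × X)) (A : Set X) : Set X := {y | ∃ x ∈ A, (y, x) ∈ U}

/-- A quasi-uniformity: a filter of reflexive relations, each containing
a relational square of a member. -/
structure IsQuasiUniformity (𝒰 : Filter (X × X)) : Prop where
  refl : ∀ U ∈ 𝒰, SetRel.id ⊆ U
  comp : ∀ U ∈ 𝒰, ∃ V ∈ 𝒰, SetRel.comp V V ⊆ U

/-- A filter is stable if `⋂_{F ∈ ℱ} U(F) ∈ ℱ` for all `U ∈ 𝒰`. -/
def IsStable (𝒰 : Filter (X × X)) (ℱ : Filter X) : Prop :=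
  ∀ U ∈ 𝒰, (⋂ F ∈ ℱ.sets, relImg U F) ∈ ℱ

/-- `U_ℱ = ⋂_{F ∈ ℱ} (U⁻¹(F) ∩ U(F))`. -/
def bigU (U : Set (X × X)) (ℱ : Filter X) : Set X :=
  ⋂ F ∈ ℱ.sets, (relPre U F ∩ relImg U F)

/-- A filter is doubly stable if `U_ℱ ∈ ℱ` for all `U ∈ 𝒰`. -/
def IsDoublyStable (𝒰 : Filter (X × X)) (ℱ : Filter X) : Prop :=
  ∀ U ∈ 𝒰, bigU U ℱ ∈ ℱ

/-- The 2-envelope of a filter. -/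
def envelope (𝒰 : Filter (X × X)) (ℱ : Filter X) : Filter X :=
  Filter.generate {S | ∃ U ∈ 𝒰, ∃ F ∈ ℱ, S = relPre U F ∩ relImg U F}

/-- The filter `ℱ_𝒰` generated by `{U_ℱ : U ∈ 𝒰}`. -/
def filterU (𝒰 : Filter (X × X)) (ℱ : Filter X) : Filter X :=
  Filter.generate {S | ∃ U ∈ 𝒰, S = bigU U ℱ}

/-- `τ(𝒰)`-cluster points of a filter. -/
def fwdCluster (𝒰 : Filter (X × X)) (ℱ : Filter X) : Set X :=
  {x | ∀ F ∈ ℱ, ∀ U ∈ 𝒰, ∃ y ∈ F, (x, y) ∈ U}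

/-- `τ(𝒰⁻¹)`-cluster points of a filter. -/
def bwdCluster (𝒰 : Filter (X × X)) (ℱ : Filter X) : Set X :=
  {x | ∀ F ∈ ℱ, ∀ U ∈ 𝒰, ∃ y ∈ F, (y, x) ∈ U}

/-- The set of double cluster points of a filter. -/
def doubleCluster (𝒰 : Filter (X × X)) (ℱ : Filter X) : Set X :=
  fwdCluster 𝒰 ℱ ∩ bwdCluster 𝒰 ℱ

/-- The basic entourage `U_D = U_+ ∩ U_-` of the stability quasi-uniformity. -/
def UD (U : Set (X × X)) : Set (Filter X × Filter X) :=
  {p | (⋂ F ∈ p.1.sets, relImg U F) ∈ p.2 ∧ (⋂ G ∈ p.2.sets, relPre U G) ∈ p.1}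


lemma envelope_le (𝒰 : Filter (X × X)) (h𝒰 : IsQuasiUniformity 𝒰) (ℱ : Filter X) :
    ℱ ≤ envelope 𝒰 ℱ := by
  rw [envelope, Filter.le_generate_iff]
  rintro S ⟨U, hU, F, hF, rfl⟩
  exact ℱ.sets_of_superset hF fun x hx =>
    ⟨⟨x, hx, h𝒰.refl U hU rfl⟩, ⟨x, hx, h𝒰.refl U hU rfl⟩⟩

lemma mem_envelope (𝒰 : Filter (X × X)) (ℱ : Filter X) {U F} (hU : U ∈ 𝒰) (hF : F ∈ ℱ) :
    relPre U F ∩ relImg U F ∈ envelope 𝒰 ℱ :=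
  Filter.mem_generate_of_mem ⟨U, hU, F, hF, rfl⟩

theorem stmt7 (𝒰 : Filter (X × X)) (h𝒰 : IsQuasiUniformity 𝒰) (ℱ : Filter X) :
    fwdCluster 𝒰 (envelope 𝒰 ℱ) = fwdCluster 𝒰 ℱ ∧
      bwdCluster 𝒰 (envelope 𝒰 ℱ) = bwdCluster 𝒰 ℱ := by
  constructor <;> apply Set.Subset.antisymm
  · intro x hx F hF U hU
    obtain ⟨V, hV, hVV⟩ := h𝒰.comp U hU
    obtain ⟨y, ⟨⟨z, hz, hyz⟩, -⟩, hxy⟩ := hx _ (mem_envelope 𝒰 ℱ hV hF) V hV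
    exact ⟨z, hz, hVV ⟨y, hxy, hyz⟩⟩
  · intro x hx G hG U hU
    exact hx G (envelope_le 𝒰 h𝒰 ℱ hG) U hU
  · intro x hx F hF U hU
    obtain ⟨V, hV, hVV⟩ := h𝒰.comp U hU
    obtain ⟨y, ⟨-, ⟨z, hz, hzy⟩⟩, hyx⟩ := hx _ (mem_envelope 𝒰 ℱ hV hF) V hV
    exact ⟨z, hz, hVV ⟨y, hzy, hyx⟩⟩
  · intro x hx G hG U hU
    exact hx G (envelope_le 𝒰 h𝒰 ℱ hG) U hU
end

section
/- For each doubly stable filter ℱ on a quasi-uniform space (X, 𝒰), the filter ℱ_𝒰 has a base consisting of τ(𝒰^s)-open subsets of X. -/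
open Filter Set

variable {X Y : Type*}

/-- A set is `τ(𝒰^s)`-open if it is a neighborhood of each of its points for the
symmetrized entourage balls. -/
def IsOpenS (𝒰 : Filter (X × X)) (S : Set X) : Prop :=
  ∀ x ∈ S, ∃ U ∈ 𝒰, {y | (x, y) ∈ U ∧ (y, x) ∈ U} ⊆ S


lemma bigU_mono {U V : Set (X × X)} (h : U ⊆ V) (ℱ : Filter X) :
    bigU U ℱ ⊆ bigU V ℱ := by
  intro x hx
  simp only [bigU, mem_iInter] at hx ⊢
  intro F hF
  obtain ⟨⟨a, ha, hxa⟩, ⟨b, hb, hbx⟩⟩ := hx F hF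
  exact ⟨⟨a, ha, h hxa⟩, ⟨b, hb, h hbx⟩⟩

lemma mem_filterU {𝒰 : Filter (X × X)} {ℱ : Filter X} {T : Set X}
    (hT : T ∈ filterU 𝒰 ℱ) : ∃ U ∈ 𝒰, bigU U ℱ ⊆ T := by
  induction hT with
  | basic h => obtain ⟨U, hU, rfl⟩ := h; exact ⟨U, hU, subset_rfl⟩
  | univ => exact ⟨univ, univ_mem, subset_univ _⟩
  | superset _ hsub ih => obtain ⟨U, hU, h⟩ := ih; exact ⟨U, hU, h.trans hsub⟩
  | inter _ _ ih1 ih2 =>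
      obtain ⟨U, hU, h1⟩ := ih1
      obtain ⟨V, hV, h2⟩ := ih2
      exact ⟨U ∩ V, inter_mem hU hV,
        subset_inter ((bigU_mono inter_subset_left ℱ).trans h1)
          ((bigU_mono inter_subset_right ℱ).trans h2)⟩

theorem stmt10 (𝒰 : Filter (X × X)) (h𝒰 : IsQuasiUniformity 𝒰) (ℱ : Filter X)
    (hds : IsDoublyStable 𝒰 ℱ) :
    ∀ T ∈ filterU 𝒰 ℱ, ∃ S ∈ filterU 𝒰 ℱ, IsOpenS 𝒰 S ∧ S ⊆ T := by
  intro T hT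
  obtain ⟨U, hU, hUT⟩ := mem_filterU hT
  obtain ⟨V, hV, hVU⟩ := h𝒰.comp U hU
  refine ⟨{x | ∃ W ∈ 𝒰, {z | (x, z) ∈ W ∧ (z, x) ∈ W} ⊆ bigU U ℱ}, ?_, ?_, ?_⟩
  · refine Filter.mem_of_superset (Filter.mem_generate_of_mem ⟨V, hV, rfl⟩) ?_
    intro x hx
    refine ⟨V, hV, fun z hz => ?_⟩
    simp only [bigU, mem_iInter] at hx ⊢
    intro F hF
    obtain ⟨⟨a, ha, hxa⟩, ⟨b, hb, hbx⟩⟩ := hx F hF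
    exact ⟨⟨a, ha, hVU ⟨x, hz.2, hxa⟩⟩, ⟨b, hb, hVU ⟨x, hbx, hz.1⟩⟩⟩
  · intro x hx
    obtain ⟨W, hW, hball⟩ := hx
    obtain ⟨W', hW', hW'W⟩ := h𝒰.comp W hW
    refine ⟨W', hW', fun z hz => ⟨W', hW', fun w hw => hball ?_⟩⟩
    exact ⟨hW'W ⟨z, hz.1, hw.1⟩, hW'W ⟨z, hw.2, hz.2⟩⟩
  · intro x hx
    obtain ⟨W, hW, hball⟩ := hx
    exact hUT (hball ⟨h𝒰.refl W hW rfl, h𝒰.refl W hW rfl⟩)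
end

section
/- The map C ↦ 𝒞_C sending a nonempty subset C of a quasi-uniform space (X, 𝒰) to the principal filter generated by C is a quasi-uniform embedding of (𝒫₀(X), 𝒰_H) into (S_D(X), 𝒰_D): for every U ∈ 𝒰 and nonempty A, B ⊆ X, (A, B) ∈ U_H if and only if (𝒞_A, 𝒞_B) ∈ U_D. -/
open Filter Set

variable {X Y : Type*}

/-- The basic entourage of the Hausdorff quasi-uniformity. -/
def UH (U : Set (X × X)) : Set (Set X × Set X) :=
  {p | p.2 ⊆ relImg U p.1 ∧ p.1 ⊆ relPre U p.2}


lemma relImg_mono {U : Set (X × X)} {A B : Set X} (h : A ⊆ B) : relImg U A ⊆ relImg U B :=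
  fun _ ⟨x, hx, hxy⟩ => ⟨x, h hx, hxy⟩

lemma relPre_mono {U : Set (X × X)} {A B : Set X} (h : A ⊆ B) : relPre U A ⊆ relPre U B :=
  fun _ ⟨x, hx, hxy⟩ => ⟨x, h hx, hxy⟩

lemma biInter_relImg_principal (U : Set (X × X)) (C : Set X) :
    (⋂ F ∈ (Filter.principal C).sets, relImg U F) = relImg U C := by
  apply subset_antisymm
  · exact Set.biInter_subset_of_mem (by simp)
  · exact Set.subset_iInter₂ fun F hF => relImg_mono (by simpa using hF)

lemma biInter_relPre_principal (U : Set (X × X)) (C : Set X) :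
    (⋂ F ∈ (Filter.principal C).sets, relPre U F) = relPre U C := by
  apply subset_antisymm
  · exact Set.biInter_subset_of_mem (by simp)
  · exact Set.subset_iInter₂ fun F hF => relPre_mono (by simpa using hF)

theorem stmt14 (𝒰 : Filter (X × X)) (h𝒰 : IsQuasiUniformity 𝒰) :
    (∀ C : Set X, C.Nonempty → IsDoublyStable 𝒰 (Filter.principal C)) ∧
    (∀ A B : Set X, Filter.principal A = Filter.principal B → A = B) ∧
    (∀ U ∈ 𝒰, ∀ A B : Set X, A.Nonempty → B.Nonempty →
      ((A, B) ∈ UH U ↔ (Filter.principal A, Filter.principal B) ∈ UD U)) := by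
  refine ⟨?_, ?_, ?_⟩
  · intro C _ U hU
    simp only [Filter.mem_principal, bigU]
    refine Set.subset_iInter₂ fun F hF => ?_
    simp only [Filter.mem_sets, Filter.mem_principal] at hF
    intro x hx
    exact ⟨⟨x, hF hx, h𝒰.refl U hU rfl⟩, ⟨x, hF hx, h𝒰.refl U hU rfl⟩⟩
  · intro A B h
    simpa using h
  · intro U hU A B _ _
    simp only [UH, UD, Set.mem_setOf_eq, biInter_relImg_principal, biInter_relPre_principal,
      Filter.mem_principal]
end
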